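/- Let H be a finite dimensional hereditary algebra with a module T satisfying Ext¹(T,T) = 0. Suppose 0 → A → C → K → 0 is a short exact sequence where A → C is a minimal left add T-approximation. Then Ext¹(K, T) = 0. -/

import Mathlib

open CategoryTheory

/-- `Ext¹` of modules, as an abelian group (`ℤ`-module). -/
noncomputable def ext1 (Λ : Type) [Ring Λ] (M N : ModuleCat Λ) : ModuleCat ℤ :=
  ((Ext ℤ (ModuleCat Λ) 1).obj (Opposite.op M)).obj N

/-- `X ∈ add T`: `X` is a direct summand of a finite direct sum of copies of `T`. -/
def memAdd (Λ : Type) [Ring Λ] (T X : ModuleCat Λ) : Prop :=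
  ∃ (n : ℕ) (i : X →ₗ[Λ] (Fin n → T)) (p : (Fin n → T) →ₗ[Λ] X),
    p ∘ₗ i = LinearMap.id

/-- `f : A → C` is a minimal left `add T`-approximation: `C ∈ add T`, every map from `A` to a
module in `add T` factors through `f`, and `f` is left minimal. -/
def IsMinimalLeftAddApprox (Λ : Type) [Ring Λ] (T A C : ModuleCat Λ)
    (f : A →ₗ[Λ] C) : Prop :=
  memAdd Λ T C ∧
  (∀ (T' : ModuleCat.{0} Λ), memAdd Λ T T' → ∀ g : A →ₗ[Λ] T',
    ∃ h : C →ₗ[Λ] T', h ∘ₗ f = g) ∧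
  (∀ e : C →ₗ[Λ] C, e ∘ₗ f = f → Function.Bijective e)

section Aux

universe w u₁ u₂ u₃ u₄

variable {H : Type} [Ring H]

/-- Factoring a linear map through a surjection whose kernel it kills. -/
lemma factor_surj {X : Type u₁} {M : Type u₂} {E : Type u₃} [AddCommGroup X] [Module H X] [AddCommGroup M] [Module H M]
    [AddCommGroup E] [Module H E] (π : X →ₗ[H] M) (hπ : Function.Surjective π)
    (w : X →ₗ[H] E) (hw : ∀ x, π x = 0 → w x = 0) :
    ∃ σ : M →ₗ[H] E, σ ∘ₗ π = w := by
  have hle : LinearMap.ker π ≤ LinearMap.ker w := fun x hx => hw x hx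
  have key : ∀ x : X, ((LinearMap.quotKerEquivOfSurjective π hπ).symm (π x) : X ⧸ LinearMap.ker π)
      = Submodule.Quotient.mk x := by
    intro x
    rw [LinearEquiv.symm_apply_eq]
    rfl
  refine ⟨(LinearMap.ker π).liftQ w hle ∘ₗ
    (LinearMap.quotKerEquivOfSurjective π hπ).symm.toLinearMap, ?_⟩
  ext x
  simp [key x]

/-- Every short exact sequence `0 → N → E → M → 0` splits. -/
def SplitAll (H : Type) [Ring H] (M : Type u₁) (N : Type u₂) [AddCommGroup M] [Module H M]
    [AddCommGroup N] [Module H N] : Prop :=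
  ∀ (E : Type w) [AddCommGroup E] [Module H E] (ι : N →ₗ[H] E) (q : E →ₗ[H] M),
    Function.Injective ι → Function.Surjective q → LinearMap.range ι = LinearMap.ker q →
    ∃ σ : M →ₗ[H] E, q ∘ₗ σ = LinearMap.id

lemma splitAll_of_equiv {M : Type u₁} {M' : Type u₂} {N : Type u₃} [AddCommGroup M]
    [Module H M] [AddCommGroup M']
    [Module H M'] [AddCommGroup N] [Module H N] (e : M ≃ₗ[H] M')
    (h : SplitAll.{w} H M N) : SplitAll.{w} H M' N := by
  intro E _ _ ι q hι hq hex
  obtain ⟨σ, hσ⟩ := h E ι (e.symm.toLinearMap ∘ₗ q) hι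
    (fun m => (hq (e m)).imp (fun x hx => by simp [hx]))
    (by
      ext x
      simp only [LinearMap.mem_ker, LinearMap.coe_comp, Function.comp_apply,
        LinearEquiv.coe_coe]
      constructor
      · rintro ⟨t, rfl⟩
        have : ι t ∈ LinearMap.ker q := hex ▸ LinearMap.mem_range_self ι t
        simp only [LinearMap.mem_ker] at this
        simp [this]
      · intro hx
        have : q x = 0 := by
          have := congrArg e hx
          simpa using this
        exact hex ▸ LinearMap.mem_ker.mpr this)
  refine ⟨σ ∘ₗ e.symm.toLinearMap, ?_⟩
  ext m'
  have := LinearMap.congr_fun hσ (e.symm m')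
  simp only [LinearMap.coe_comp, Function.comp_apply, LinearEquiv.coe_coe,
    LinearMap.id_coe, id_eq] at this ⊢
  have := congrArg e this
  simpa using this

lemma splitAll_zero {N : Type u₁} [AddCommGroup N] [Module H N] :
    SplitAll.{w} H (Fin 0 → N) N := by
  intro E _ _ ι q hι hq hex
  exact ⟨0, LinearMap.ext fun m => Subsingleton.elim _ _⟩

lemma splitAll_prod {M : Type u₁} {M' : Type u₂} {N : Type u₃} [AddCommGroup M]
    [Module H M] [AddCommGroup M']
    [Module H M'] [AddCommGroup N] [Module H N]
    (h : SplitAll.{w} H M N) (h' : SplitAll.{w} H M' N) : SplitAll.{w} H (M × M') N := by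
  intro E _ _ ι q hι hq hex
  set q₁ : E →ₗ[H] M := (LinearMap.fst H M M') ∘ₗ q with hq₁
  set q₂ : E →ₗ[H] M' := (LinearMap.snd H M M') ∘ₗ q with hq₂
  -- first factor
  have hι₁mem : ∀ t : N, ι t ∈ LinearMap.ker q₂ := by
    intro t
    have : q (ι t) = 0 := by
      have : ι t ∈ LinearMap.ker q := hex ▸ LinearMap.mem_range_self ι t
      exact this
    simp [hq₂, this]
  obtain ⟨s₁, hs₁⟩ := h (LinearMap.ker q₂)
    (LinearMap.codRestrict _ ι hι₁mem)
    (q₁ ∘ₗ (LinearMap.ker q₂).subtype)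
    (fun a b hab => hι (Subtype.ext_iff.mp hab))
    (by
      intro m
      obtain ⟨e, he⟩ := hq (m, 0)
      refine ⟨⟨e, ?_⟩, ?_⟩
      · simp [hq₂, he]
      · simp [hq₁, he])
    (by
      ext x
      constructor
      · rintro ⟨t, rfl⟩
        simp [hq₁]
        have : ι t ∈ LinearMap.ker q := hex ▸ LinearMap.mem_range_self ι t
        simp only [LinearMap.mem_ker] at this
        simp [LinearMap.codRestrict, this]
      · intro hx
        have hx2 : q₂ (x : E) = 0 := x.2
        have hx1 : q₁ (x : E) = 0 := hx
        have : q (x : E) = 0 := by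
          have hx1' : (q (x : E)).1 = 0 := hx1
          have hx2' : (q (x : E)).2 = 0 := hx2
          exact Prod.ext hx1' hx2' 
        have : (x : E) ∈ LinearMap.range ι := hex ▸ LinearMap.mem_ker.mpr this
        obtain ⟨t, ht⟩ := this
        exact ⟨t, Subtype.ext ht⟩)
  have hι₂mem : ∀ t : N, ι t ∈ LinearMap.ker q₁ := by
    intro t
    have : ι t ∈ LinearMap.ker q := hex ▸ LinearMap.mem_range_self ι t
    simp only [LinearMap.mem_ker] at this
    simp [hq₁, this]
  obtain ⟨s₂, hs₂⟩ := h' (LinearMap.ker q₁)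
    (LinearMap.codRestrict _ ι hι₂mem)
    (q₂ ∘ₗ (LinearMap.ker q₁).subtype)
    (fun a b hab => hι (Subtype.ext_iff.mp hab))
    (by
      intro m'
      obtain ⟨e, he⟩ := hq (0, m')
      refine ⟨⟨e, ?_⟩, ?_⟩
      · simp [hq₁, he]
      · simp [hq₂, he])
    (by
      ext x
      constructor
      · rintro ⟨t, rfl⟩
        have : ι t ∈ LinearMap.ker q := hex ▸ LinearMap.mem_range_self ι t
        simp only [LinearMap.mem_ker] at this
        simp [hq₂, LinearMap.codRestrict, this]
      · intro hx
        have hx1 : q₁ (x : E) = 0 := x.2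
        have hx2 : q₂ (x : E) = 0 := hx
        have : q (x : E) = 0 := by
          have hx1' : (q (x : E)).1 = 0 := hx1
          have hx2' : (q (x : E)).2 = 0 := hx2
          exact Prod.ext hx1' hx2' 
        have : (x : E) ∈ LinearMap.range ι := hex ▸ LinearMap.mem_ker.mpr this
        obtain ⟨t, ht⟩ := this
        exact ⟨t, Subtype.ext ht⟩)
  refine ⟨(LinearMap.ker q₂).subtype ∘ₗ s₁ ∘ₗ LinearMap.fst H M M'
    + (LinearMap.ker q₁).subtype ∘ₗ s₂ ∘ₗ LinearMap.snd H M M', LinearMap.ext ?_⟩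
  rintro ⟨m, m'⟩
  have e1 : q ((s₁ m : E)) = (m, 0) := by
    have h1 := LinearMap.congr_fun hs₁ m
    have h2 : q₂ ((s₁ m : E)) = 0 := (s₁ m).2
    simp only [LinearMap.coe_comp, Function.comp_apply, Submodule.coe_subtype,
      LinearMap.id_coe, id_eq, hq₁, hq₂, LinearMap.fst_apply, LinearMap.snd_apply] at h1 h2
    exact Prod.ext h1 h2
  have e2 : q ((s₂ m' : E)) = (0, m') := by
    have h1 := LinearMap.congr_fun hs₂ m'
    have h2 : q₁ ((s₂ m' : E)) = 0 := (s₂ m').2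
    simp only [LinearMap.coe_comp, Function.comp_apply, Submodule.coe_subtype,
      LinearMap.id_coe, id_eq, hq₁, hq₂, LinearMap.fst_apply, LinearMap.snd_apply] at h1 h2
    exact Prod.ext h2 h1
  show q ((s₁ ((m, m').1) : E) + (s₂ ((m, m').2) : E)) = (m, m')
  rw [map_add]
  rw [e1, e2, Prod.mk_add_mk, add_zero, zero_add]

/-- The linear equivalence `(Fin (n+1) → T) ≃ T × (Fin n → T)`. -/
def finSuccLinearEquiv (n : ℕ) (T : Type u₁) [AddCommGroup T] [Module H T] :
    (T × (Fin n → T)) ≃ₗ[H] (Fin (n + 1) → T) :=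
  LinearEquiv.ofLinear
    (LinearMap.pi (fun j => Fin.cases (LinearMap.fst H T (Fin n → T))
      (fun i => (LinearMap.proj i) ∘ₗ LinearMap.snd H T (Fin n → T)) j))
    (LinearMap.prod (LinearMap.proj 0) (LinearMap.pi fun i => LinearMap.proj i.succ))
    (by
      refine LinearMap.ext fun fn => funext fun j => ?_
      refine Fin.cases ?_ (fun i => ?_) j <;>
        simp [LinearMap.pi_apply])
    (by
      refine LinearMap.ext fun x => Prod.ext ?_ (funext fun i => ?_) <;>
        simp [LinearMap.pi_apply])

lemma splitAll_fin {T : Type u₁} [AddCommGroup T] [Module H T]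
    (h : SplitAll.{w} H T T) : ∀ n, SplitAll.{w} H (Fin n → T) T
  | 0 => splitAll_zero
  | (n + 1) => splitAll_of_equiv (finSuccLinearEquiv n T)
      (splitAll_prod h (splitAll_fin h n))

/-- Lifting a map along a surjection with kernel `N`, given `SplitAll` for the source. -/
lemma pullback_section {M : Type u₁} {M' : Type u₂} {E : Type w} {N : Type u₃}
    [AddCommGroup M] [Module H M]
    [AddCommGroup M'] [Module H M'] [AddCommGroup E] [Module H E]
    [AddCommGroup N] [Module H N]
    (p : M' →ₗ[H] M) (ι : N →ₗ[H] E) (q : E →ₗ[H] M)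
    (hι : Function.Injective ι) (hq : Function.Surjective q)
    (hex : LinearMap.range ι = LinearMap.ker q)
    (h : SplitAll.{max u₂ w} H M' N) :
    ∃ w : M' →ₗ[H] E, q ∘ₗ w = p := by
  set δ : (M' × E) →ₗ[H] M :=
    p ∘ₗ LinearMap.fst H M' E - q ∘ₗ LinearMap.snd H M' E with hδ
  set U : Submodule H (M' × E) := LinearMap.ker δ with hU
  have hmemι : ∀ t : N, ((0 : M'), ι t) ∈ U := by
    intro t
    have : ι t ∈ LinearMap.ker q := hex ▸ LinearMap.mem_range_self ι t
    simp only [LinearMap.mem_ker] at this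
    simp [hU, hδ, this]
  set ι' : N →ₗ[H] U :=
    LinearMap.codRestrict U ((LinearMap.inr H M' E) ∘ₗ ι) (fun t => hmemι t) with hι'
  set r : U →ₗ[H] M' := (LinearMap.fst H M' E) ∘ₗ U.subtype with hr
  have hrsurj : Function.Surjective r := by
    intro m'
    obtain ⟨e, he⟩ := hq (p m')
    exact ⟨⟨(m', e), by simp [hU, hδ, he]⟩, rfl⟩
  have hι'inj : Function.Injective ι' := by
    intro a b hab
    have : ((0 : M'), ι a) = ((0 : M'), ι b) := congrArg Subtype.val hab
    exact hι (Prod.ext_iff.mp this).2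
  have hexU : LinearMap.range ι' = LinearMap.ker r := by
    ext x
    constructor
    · rintro ⟨t, rfl⟩
      show ((((0 : M'), ι t) : M' × E)).1 = 0
      rfl
    · intro hx
      have hx1 : ((x : M' × E)).1 = 0 := hx
      have hx2 : q ((x : M' × E)).2 = 0 := by
        have hxU : δ (x : M' × E) = 0 := x.2
        simp only [hδ, LinearMap.sub_apply, LinearMap.coe_comp, Function.comp_apply,
          LinearMap.fst_apply, LinearMap.snd_apply, sub_eq_zero] at hxU
        rw [← hxU, hx1, map_zero]
      have : ((x : M' × E)).2 ∈ LinearMap.range ι := hex ▸ LinearMap.mem_ker.mpr hx2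
      obtain ⟨t, ht⟩ := this
      refine ⟨t, Subtype.ext ?_⟩
      show (((0 : M'), ι t) : M' × E) = _
      rw [ht, ← hx1]
  obtain ⟨s, hs⟩ := h U ι' r hι'inj hrsurj hexU
  refine ⟨(LinearMap.snd H M' E) ∘ₗ U.subtype ∘ₗ s, ?_⟩
  ext m'
  have hmem : δ ((s m' : M' × E)) = 0 := (s m').2
  have hfst : ((s m' : M' × E)).1 = m' := LinearMap.congr_fun hs m'
  simp only [hδ, LinearMap.sub_apply, LinearMap.coe_comp, Function.comp_apply,
    LinearMap.fst_apply, LinearMap.snd_apply, sub_eq_zero] at hmem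
  simp only [LinearMap.coe_comp, Function.comp_apply, Submodule.coe_subtype,
    LinearMap.snd_apply]
  rw [← hmem, hfst]

lemma splitAll_retract {M : Type u₁} {C : Type u₂} {N : Type u₃} [AddCommGroup M]
    [Module H M]
    [AddCommGroup C] [Module H C] [AddCommGroup N] [Module H N]
    (i : C →ₗ[H] M) (p : M →ₗ[H] C) (hip : p ∘ₗ i = LinearMap.id)
    (h : SplitAll.{max u₁ w} H M N) : SplitAll.{w} H C N := by
  intro E _ _ ι q hι hq hex
  obtain ⟨w, hw⟩ := pullback_section p ι q hι hq hex h
  refine ⟨w ∘ₗ i, ?_⟩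
  ext c
  have h1 := LinearMap.congr_fun hw (i c)
  have h2 := LinearMap.congr_fun hip c
  simp only [LinearMap.coe_comp, Function.comp_apply, LinearMap.id_coe, id_eq] at h1 h2 ⊢
  rw [h1, h2]

lemma hom_congr_fun {X Y : ModuleCat.{u₁} H} {f g : X ⟶ Y} (h : f = g) (x : X) : f x = g x := by
  rw [h]

lemma ext1_isZero_iff (M N : ModuleCat.{0} H) (P : ProjectiveResolution M) :
    Limits.IsZero (ext1 H M N) ↔
      ∀ φ : P.complex.X 1 ⟶ N, P.complex.d 2 1 ≫ φ = 0 →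
        ∃ ψ : P.complex.X 0 ⟶ N, P.complex.d 1 0 ≫ ψ = φ := by
  have h1 : Limits.IsZero (ext1 H M N) ↔
      Limits.IsZero ((P.complex.linearYonedaObj ℤ N).homology 1) :=
    ⟨fun h => h.of_iso (P.isoExt 1 N).symm, fun h => h.of_iso (P.isoExt 1 N)⟩
  rw [h1, ← HomologicalComplex.exactAt_iff_isZero_homology,
    HomologicalComplex.exactAt_iff' _ 0 1 2 (by simp) (by simp)]
  rw [ShortComplex.moduleCat_exact_iff]
  constructor
  · intro h φ hφ
    obtain ⟨ψ, hψ⟩ := h φ hφ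
    exact ⟨ψ, hψ⟩
  · intro h φ hφ
    obtain ⟨ψ, hψ⟩ := h φ hφ
    exact ⟨ψ, hψ⟩

lemma res_surj (M : ModuleCat.{u₁} H) (P : ProjectiveResolution M) :
    Function.Surjective (P.π.f 0) := by
  rw [← ModuleCat.epi_iff_surjective]; infer_instance

lemma res_exact0 (M : ModuleCat.{u₁} H) (P : ProjectiveResolution M) :
    LinearMap.range (P.complex.d 1 0).hom = LinearMap.ker (P.π.f 0).hom := by
  have h := ShortComplex.exact_of_g_is_cokernel
    (ShortComplex.mk (P.complex.d 1 0) (P.π.f 0) P.complex_d_comp_π_f_zero) P.isColimitCokernelCofork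
  exact (ShortComplex.moduleCat_exact_iff_range_eq_ker _).1 h

lemma res_exact1 (M : ModuleCat.{u₁} H) (P : ProjectiveResolution M) :
    LinearMap.range (P.complex.d 2 1).hom = LinearMap.ker (P.complex.d 1 0).hom :=
  (ShortComplex.moduleCat_exact_iff_range_eq_ker _).1 (P.exact_succ 0)

lemma splitAll_of_isZero (M N : ModuleCat.{0} H) (h : Limits.IsZero (ext1 H M N)) :
    SplitAll.{0} H M N := by
  obtain ⟨P⟩ := (inferInstance : HasProjectiveResolution M).out
  intro E _ _ ι q hι hq hex
  set X0 := P.complex.X 0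
  set X1 := P.complex.X 1
  set d10 := P.complex.d 1 0
  set π0 := P.π.f 0
  -- lift π0 through q
  let qm : ModuleCat.of H E ⟶ ((ChainComplex.single₀ (ModuleCat H)).obj M).X 0 := ModuleCat.ofHom q
  have : Epi qm := (ModuleCat.epi_iff_surjective qm).mpr hq
  set u : X0 ⟶ ModuleCat.of H E := Projective.factorThru π0 qm with hu
  let uL : ↑X0 →ₗ[H] E := u.hom
  have hu' : ∀ x, q (uL x) = π0 x := fun x =>
    hom_congr_fun (Projective.factorThru_comp π0 qm) x
  -- the induced map X1 → N
  have hd10π : ∀ y : X1, π0 (d10 y) = 0 := by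
    intro y
    exact hom_congr_fun P.complex_d_comp_π_f_zero y
  have hmem : ∀ y : X1, uL (d10 y) ∈ LinearMap.range ι := by
    intro y
    have h2 := hu' (d10 y)
    rw [hd10π y] at h2
    rw [hex]
    exact LinearMap.mem_ker.mpr h2
  set eN : N ≃ₗ[H] LinearMap.range ι := LinearEquiv.ofInjective ι hι with heN
  set h₁ : X1 ⟶ N := ModuleCat.ofHom (eN.symm.toLinearMap ∘ₗ
    LinearMap.codRestrict (LinearMap.range ι) (uL ∘ₗ d10.hom) hmem) with hh₁
  have hιh₁ : ∀ y : X1, ι (h₁ y) = uL (d10 y) := by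
    intro y
    obtain ⟨t, ht⟩ := hmem y
    have h2 : eN t = ⟨uL (d10 y), hmem y⟩ :=
      Subtype.ext (by simpa [heN, LinearEquiv.ofInjective_apply] using ht)
    show ι (eN.symm ⟨uL (d10 y), hmem y⟩) = uL (d10 y)
    rw [← h2, LinearEquiv.symm_apply_apply, ht]
  have hd21 : P.complex.d 2 1 ≫ h₁ = 0 := by
    refine ModuleCat.hom_ext (LinearMap.ext fun z => ?_)
    show h₁ (P.complex.d 2 1 z) = 0
    apply hι
    have hz : d10 (P.complex.d 2 1 z) = 0 := hom_congr_fun (P.complex.d_comp_d 2 1 0) z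
    rw [hιh₁, hz]
    simp
  obtain ⟨ψ, hψ⟩ := (ext1_isZero_iff M N P).mp h h₁ hd21
  have hψ' : ∀ y : X1, ψ (d10 y) = h₁ y := fun y => hom_congr_fun hψ y
  set w : ↑X0 →ₗ[H] E := uL - ι ∘ₗ (show ↑X0 →ₗ[H] ↑N from ψ.hom) with hw
  have hwapp : ∀ x : ↑X0, w x = uL x - ι (ψ x) := fun x => rfl
  have hker : ∀ x : ↑X0, π0 x = 0 → w x = 0 := by
    intro x hx
    have : x ∈ LinearMap.range d10.hom := (res_exact0 M P) ▸ LinearMap.mem_ker.mpr hx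
    obtain ⟨y, rfl⟩ := this
    rw [hwapp]
    have e3 : ι (ψ (d10 y)) = uL (d10 y) := by rw [hψ' y, hιh₁ y]
    rw [e3, sub_self]
  obtain ⟨σ, hσ⟩ := factor_surj (show ↑X0 →ₗ[H] ↑M from π0.hom) (res_surj M P) w hker
  refine ⟨σ, LinearMap.ext fun m => ?_⟩
  obtain ⟨x, rfl⟩ := res_surj M P m
  have h1 : σ (π0 x) = w x := LinearMap.congr_fun hσ x
  show q (σ (π0 x)) = π0 x
  rw [h1, hwapp x, map_sub]
  have h2 : q (ι (ψ x)) = 0 := by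
    have : ι (ψ x) ∈ LinearMap.ker q := hex ▸ LinearMap.mem_range_self ι (ψ x)
    exact this
  rw [hu' x, h2]
  exact sub_zero _

lemma isZero_of_splitAll (M N : ModuleCat.{0} H) (h : SplitAll.{0} H M N) :
    Limits.IsZero (ext1 H M N) := by
  obtain ⟨P⟩ := (inferInstance : HasProjectiveResolution M).out
  rw [ext1_isZero_iff M N P]
  set X0 := P.complex.X 0
  set X1 := P.complex.X 1
  set d10 := P.complex.d 1 0
  set π0 := P.π.f 0
  intro φ hφ
  let φL : ↑X1 →ₗ[H] ↑N := φ.hom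
  have hφ' : ∀ z, φL (P.complex.d 2 1 z) = 0 := by
    intro z
    exact hom_congr_fun hφ z
  have hd10mem : ∀ y : ↑X1, d10 y ∈ LinearMap.ker (show ↑X0 →ₗ[H] ↑M from π0.hom) :=
    fun y => hom_congr_fun P.complex_d_comp_π_f_zero y
  set KP := LinearMap.ker (show ↑X0 →ₗ[H] ↑M from π0.hom) with hKP
  set d10' : ↑X1 →ₗ[H] KP :=
    LinearMap.codRestrict KP (show ↑X1 →ₗ[H] ↑X0 from d10.hom) hd10mem with hd10'
  have hd10'surj : Function.Surjective d10' := by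
    rintro ⟨x, hx⟩
    have hx' : x ∈ LinearMap.ker (P.π.f 0).hom := hx
    have : x ∈ LinearMap.range (P.complex.d 1 0).hom := (res_exact0 M P).symm ▸ hx'
    obtain ⟨y, hy⟩ := this
    exact ⟨y, Subtype.ext hy⟩
  obtain ⟨hmap, hhmap⟩ := factor_surj d10' hd10'surj φL (by
    intro y hy
    have hy0 : y ∈ LinearMap.ker (P.complex.d 1 0).hom :=
      show d10 y = 0 from congrArg Subtype.val hy
    have : y ∈ LinearMap.range (P.complex.d 2 1).hom := (res_exact1 M P).symm ▸ hy0
    obtain ⟨z, rfl⟩ := this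
    exact hφ' z)
  have hhmap' : ∀ y, hmap (d10' y) = φL y := fun y => LinearMap.congr_fun hhmap y
  -- the pushout of `d10` along `hmap`
  set ν : KP →ₗ[H] (↑N × ↑X0) := LinearMap.prod hmap (-(KP.subtype)) with hν
  set W := LinearMap.range ν with hW
  set E := (↑N × ↑X0) ⧸ W with hE
  set mk : (↑N × ↑X0) →ₗ[H] E := W.mkQ with hmk
  set ι : ↑N →ₗ[H] E := mk ∘ₗ LinearMap.inl H ↑N ↑X0 with hι
  have hWle : W ≤ LinearMap.ker ((show ↑X0 →ₗ[H] ↑M from π0.hom) ∘ₗ LinearMap.snd H ↑N ↑X0) := by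
    rintro _ ⟨x, rfl⟩
    show π0 (-(x : ↑X0)) = 0
    rw [map_neg]
    have hx : π0 (x : ↑X0) = 0 := x.2
    rw [hx, neg_zero]
  set q : E →ₗ[H] ↑M := W.liftQ _ hWle with hq
  have hqmk : ∀ (t : ↑N) (x : ↑X0), q (mk (t, x)) = π0 x := fun t x => rfl
  have hιinj : Function.Injective ι := by
    intro a b hab
    have : ((a, (0 : ↑X0)) : ↑N × ↑X0) - (b, 0) ∈ W := (Submodule.Quotient.eq W).mp hab
    obtain ⟨x, hx⟩ := this
    have hx2 : -(x : ↑X0) = (0 : ↑X0) - 0 := congrArg Prod.snd hx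
    have hx0 : x = 0 := Subtype.ext (by simpa using hx2)
    have hx1 : hmap x = a - b := congrArg Prod.fst hx
    rw [hx0, map_zero] at hx1
    exact sub_eq_zero.mp hx1.symm
  have hqsurj : Function.Surjective q := by
    intro m
    obtain ⟨x, rfl⟩ := res_surj M P m
    exact ⟨mk (0, x), hqmk 0 x⟩
  have hexE : LinearMap.range ι = LinearMap.ker q := by
    ext e
    constructor
    · rintro ⟨t, rfl⟩
      show q (mk (t, 0)) = 0
      rw [hqmk, map_zero]
      rfl
    · intro he
      obtain ⟨⟨t, x⟩, rfl⟩ := W.mkQ_surjective e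
      have hx : π0 x = 0 := by
        have := LinearMap.mem_ker.mp he
        rwa [hqmk] at this
      set x' : KP := ⟨x, hx⟩ with hx'
      refine ⟨t + hmap x', ?_⟩
      show mk (t + hmap x', 0) = mk (t, x)
      refine (Submodule.Quotient.eq W).mpr ?_
      refine ⟨x', ?_⟩
      show (hmap x', -(x : ↑X0)) = (t + hmap x' - t, 0 - x)
      refine Prod.ext (by simp) (by simp)
  obtain ⟨σ, hσ⟩ := h E ι q hιinj hqsurj hexE
  have hσ' : ∀ m, q (σ m) = m := fun m => LinearMap.congr_fun hσ m
  have hmemρ : ∀ e : E, e - σ (q e) ∈ LinearMap.range ι := by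
    intro e
    have h' : e - σ (q e) ∈ LinearMap.ker q := by
      show q (e - σ (q e)) = 0
      rw [map_sub, hσ' (q e), sub_self]
    exact (SetLike.ext_iff.mp hexE (e - σ (q e))).mpr h' 
  set eN : ↑N ≃ₗ[H] LinearMap.range ι := LinearEquiv.ofInjective ι hιinj with heN
  set ρ : E →ₗ[H] ↑N := eN.symm.toLinearMap ∘ₗ
    LinearMap.codRestrict (LinearMap.range ι) (LinearMap.id - σ ∘ₗ q) hmemρ with hρ
  have hρι : ∀ t : ↑N, ρ (ι t) = t := by
    intro t
    have hq0 : q (ι t) = 0 := by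
      have : ι t ∈ LinearMap.ker q := hexE ▸ LinearMap.mem_range_self ι t
      exact this
    have h0 : ι t - σ (q (ι t)) = ι t := by rw [hq0, map_zero, sub_zero]
    have h2 : eN t = ⟨ι t - σ (q (ι t)), hmemρ (ι t)⟩ :=
      Subtype.ext (by simp only [heN, LinearEquiv.ofInjective_apply]; exact h0.symm)
    show eN.symm ⟨ι t - σ (q (ι t)), hmemρ (ι t)⟩ = t
    rw [← h2, LinearEquiv.symm_apply_apply]
  refine ⟨show P.complex.X 0 ⟶ N from ModuleCat.ofHom (ρ ∘ₗ mk ∘ₗ LinearMap.inr H ↑N ↑X0), ?_⟩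
  refine ModuleCat.hom_ext (LinearMap.ext fun y => ?_)
  show ρ (mk (0, d10 y)) = φ y
  have key : mk ((0 : ↑N), d10 y) = ι (hmap (d10' y)) := by
    show mk (0, d10 y) = mk (hmap (d10' y), 0)
    refine ((Submodule.Quotient.eq W).mpr ⟨-(d10' y), ?_⟩)
    show (hmap (-(d10' y)), -((-(d10' y) : KP) : ↑X0)) = (0 - hmap (d10' y), d10 y - 0)
    refine Prod.ext (by simp) ?_
    show -(-((d10' y : KP) : ↑X0)) = d10 y - 0
    simp
    rfl
  rw [key, hρι, hhmap' y]

lemma splitAll_shrink {M : Type u₁} {N : Type u₂} [AddCommGroup M] [Module H M]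
    [AddCommGroup N] [Module H N]
    (h : SplitAll.{max u₁ u₂} H M N) : SplitAll.{w} H M N := by
  intro E _ _ ι q hι hq hex
  classical
  set s : M → E := fun m => Classical.choose (hq m) with hs
  have hsec : ∀ m, q (s m) = m := fun m => Classical.choose_spec (hq m)
  have hmem : ∀ e : E, e - s (q e) ∈ LinearMap.range ι := fun e =>
    (SetLike.ext_iff.mp hex _).mpr
      (show q (e - s (q e)) = 0 by rw [map_sub, hsec (q e), sub_self])
  set eN : N ≃ₗ[H] LinearMap.range ι := LinearEquiv.ofInjective ι hι with heN
  have hinv : ∀ (x : E) (hx : x ∈ LinearMap.range ι), ι (eN.symm ⟨x, hx⟩) = x := by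
    intro x hx
    obtain ⟨t, ht⟩ := id hx
    have h2 : eN t = ⟨x, hx⟩ :=
      Subtype.ext (by simp only [heN, LinearEquiv.ofInjective_apply]; exact ht)
    rw [← h2, LinearEquiv.symm_apply_apply]
    exact ht
  have φ : E ≃ (N × M) :=
    { toFun := fun e => (eN.symm ⟨e - s (q e), hmem e⟩, q e)
      invFun := fun tm => ι tm.1 + s tm.2
      left_inv := fun e => by
        simp only
        rw [hinv _ (hmem e), sub_add_cancel]
      right_inv := fun tm => by
        obtain ⟨t, m⟩ := tm
        have hq0 : q (ι t) = 0 :=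
          (SetLike.ext_iff.mp hex (ι t)).mp (LinearMap.mem_range_self ι t)
        have hqv : q (ι t + s m) = m := by rw [map_add, hq0, hsec m, zero_add]
        have hval : ι t + s m - s (q (ι t + s m)) = ι t := by
          rw [hqv]
          exact add_sub_cancel_right _ _
        refine Prod.ext ?_ hqv
        show eN.symm ⟨ι t + s m - s (q (ι t + s m)), hmem _⟩ = t
        apply hι
        rw [hinv _ (hmem (ι t + s m)), hval] }
  have hsmall : Small.{max u₁ u₂} E := ⟨⟨N × M, ⟨φ⟩⟩⟩
  set e : E ≃ₗ[H] Shrink.{max u₁ u₂} E := ((Shrink.linearEquiv H E).symm : _) with he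
  obtain ⟨σ', hσ'⟩ := h (Shrink.{max u₁ u₂} E) (e.toLinearMap ∘ₗ ι) (q ∘ₗ e.symm.toLinearMap)
    (fun a b hab => hι (e.injective hab))
    (fun m => by
      obtain ⟨x, hx⟩ := hq m
      refine ⟨e x, ?_⟩
      show q (e.symm (e x)) = m
      rw [LinearEquiv.symm_apply_apply]
      exact hx)
    (by
      ext x
      constructor
      · rintro ⟨t, rfl⟩
        show q (e.symm (e (ι t))) = 0
        rw [LinearEquiv.symm_apply_apply]
        exact (SetLike.ext_iff.mp hex (ι t)).mp (LinearMap.mem_range_self ι t)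
      · intro hx
        have : e.symm x ∈ LinearMap.range ι := (SetLike.ext_iff.mp hex _).mpr hx
        obtain ⟨t, ht⟩ := this
        refine ⟨t, ?_⟩
        show e (ι t) = x
        rw [ht, LinearEquiv.apply_symm_apply])
  refine ⟨e.symm.toLinearMap ∘ₗ σ', LinearMap.ext fun m => ?_⟩
  exact LinearMap.congr_fun hσ' m

lemma splitAll_final {A : Type u₁} {C : Type u₂} {K : Type u₃} {T : Type u₄}
    [AddCommGroup A] [Module H A] [AddCommGroup C] [Module H C]
    [AddCommGroup K] [Module H K] [AddCommGroup T] [Module H T]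
    (f : A →ₗ[H] C) (g : C →ₗ[H] K)
    (hg : Function.Surjective g) (hexact : LinearMap.range f = LinearMap.ker g)
    (happ : ∀ a : A →ₗ[H] T, ∃ b : C →ₗ[H] T, b ∘ₗ f = a)
    (hCT : SplitAll.{max u₂ w} H C T) : SplitAll.{w} H K T := by
  intro E _ _ ι q hι hq hexE
  obtain ⟨w, hw⟩ := pullback_section g ι q hι hq hexE hCT
  have hw' : ∀ c, q (w c) = g c := fun c => LinearMap.congr_fun hw c
  have hmemA : ∀ x : A, w (f x) ∈ LinearMap.range ι := by
    intro x
    have h0 : g (f x) = 0 := by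
      have : f x ∈ LinearMap.ker g := hexact ▸ LinearMap.mem_range_self f x
      exact this
    have hq0 : q (w (f x)) = 0 := by rw [hw' (f x), h0]
    exact (SetLike.ext_iff.mp hexE (w (f x))).mpr hq0
  set eT : T ≃ₗ[H] LinearMap.range ι := LinearEquiv.ofInjective ι hι with heT
  set a : A →ₗ[H] T :=
    eT.symm.toLinearMap ∘ₗ LinearMap.codRestrict _ (w ∘ₗ f) hmemA with ha
  have hιa : ∀ x : A, ι (a x) = w (f x) := by
    intro x
    obtain ⟨t, ht⟩ := hmemA x
    have h2 : eT t = ⟨w (f x), hmemA x⟩ :=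
      Subtype.ext (by simp only [heT, LinearEquiv.ofInjective_apply]; exact ht)
    show ι (eT.symm ⟨w (f x), hmemA x⟩) = w (f x)
    rw [← h2, LinearEquiv.symm_apply_apply, ht]
  obtain ⟨b, hb⟩ := happ a
  have hb' : ∀ x, b (f x) = a x := fun x => LinearMap.congr_fun hb x
  set w' : C →ₗ[H] E := w - ι ∘ₗ b with hw'def
  obtain ⟨σ, hσ⟩ := factor_surj g hg w' (by
    intro c hc
    have : c ∈ LinearMap.range f := (SetLike.ext_iff.mp hexact c).mpr hc
    obtain ⟨x, rfl⟩ := this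
    show w (f x) - ι (b (f x)) = 0
    rw [hb' x, hιa x, sub_self])
  have hσ' : ∀ c, σ (g c) = w' c := fun c => LinearMap.congr_fun hσ c
  refine ⟨σ, LinearMap.ext fun m => ?_⟩
  obtain ⟨c, rfl⟩ := hg m
  show q (σ (g c)) = g c
  rw [hσ' c]
  show q (w c - ι (b c)) = g c
  rw [map_sub, hw' c]
  have hq0 : q (ι (b c)) = 0 := by
    have : ι (b c) ∈ LinearMap.ker q :=
      (SetLike.ext_iff.mp hexE (ι (b c))).mp (LinearMap.mem_range_self ι (b c))
    exact this
  rw [hq0, sub_zero]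

end Aux


/-- Let `H` be a finite dimensional hereditary algebra with a module `T` satisfying
`Ext¹(T,T) = 0`.  If `0 → A → C → K → 0` is exact with `A → C` a minimal left
`add T`-approximation, then `Ext¹(K, T) = 0`. -/
theorem stmt7 (k : Type) [Field k] (H : Type) [Ring H] [Algebra k H]
    [FiniteDimensional k H]
    (hher : ∀ P : ModuleCat H, Projective P →
      ∀ N : Submodule H P, Projective (ModuleCat.of H N))
    (T : ModuleCat H) [Module.Finite H T]
    (hT : Limits.IsZero (ext1 H T T))
    (A C K : ModuleCat H) [Module.Finite H A] [Module.Finite H C] [Module.Finite H K]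
    (f : A →ₗ[H] C) (g : C →ₗ[H] K)
    (hf : Function.Injective f) (hg : Function.Surjective g)
    (hexact : LinearMap.range f = LinearMap.ker g)
    (happrox : IsMinimalLeftAddApprox H T A C f) :
    Limits.IsZero (ext1 H K T) := by
  obtain ⟨hC, happ, -⟩ := happrox
  obtain ⟨n, i, p, hip⟩ := hC
  -- `T` is a finite module, hence small
  have hsmallT : Small.{0} (↑T : Type _) := by
    obtain ⟨m, fT, hfT⟩ := @Module.Finite.exists_fin' H (↑T) _ _ _ _
    exact ⟨⟨(Fin m → H) ⧸ LinearMap.ker fT,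
      ⟨(LinearMap.quotKerEquivOfSurjective fT hfT).toEquiv.symm⟩⟩⟩
  set eSh : (↑T : Type _) ≃ₗ[H] Shrink.{0} (↑T : Type _) := (Shrink.linearEquiv H ↑T).symm with heSh
  set T₀ : ModuleCat.{0} H := ModuleCat.of H (Shrink.{0} (↑T : Type _)) with hT₀
  have hmemT₀ : memAdd H T T₀ :=
    ⟨1, LinearMap.pi (fun _ => eSh.symm.toLinearMap),
      eSh.toLinearMap ∘ₗ LinearMap.proj 0,
      LinearMap.ext fun t => by
        show eSh (eSh.symm t) = t
        rw [LinearEquiv.apply_symm_apply]⟩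
  have happ' : ∀ a : (↑A : Type _) →ₗ[H] (↑T : Type _),
      ∃ b : (↑C : Type _) →ₗ[H] (↑T : Type _), b ∘ₗ f = a := by
    intro a
    obtain ⟨b', hb'⟩ := happ T₀ hmemT₀ (eSh.toLinearMap ∘ₗ a)
    refine ⟨eSh.symm.toLinearMap ∘ₗ b', LinearMap.ext fun x => ?_⟩
    show eSh.symm (b' (f x)) = a x
    have h1 : b' (f x) = eSh (a x) := LinearMap.congr_fun hb' x
    rw [h1, LinearEquiv.symm_apply_apply]
  exact isZero_of_splitAll K T
    (splitAll_final f g hg hexact happ'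
      (splitAll_retract i p hip
        (splitAll_fin (splitAll_shrink (splitAll_of_isZero T T hT)) n)))
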